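/- Fix p, q ∈ ℕ, counts x ∈ ℕ^p, vectors v_1, …, v_p ∈ ℝ^q, a shift a ∈ ℝ^q, and vectors m ∈ ℝ^q, s ∈ ℝ^q with s_i > 0 for all i. Let φ be the product probability measure on ℝ^q whose i-th coordinate is the real Gaussian with mean m_i and variance s_i. Then ∫ Σ_{j=1}^p [ x_j ⟨v_j, a + w⟩ − exp(⟨v_j, a + w⟩) − log(x_j!) ] dφ(w) = Σ_{j=1}^p x_j ⟨v_j, a + m⟩ − Σ_{j=1}^p exp( ⟨v_j, a + m⟩ + (1/2) Σ_{i=1}^q v_{ji}² s_i ) − Σ_{j=1}^p log(x_j!); that is, the expected Poisson log-likelihood of the counts x under the log-intensities ⟨v_j, a + W⟩ with W ∼ N(m, diag(s)) has this closed form. -/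

import Mathlib

open MeasureTheory ProbabilityTheory

/-- The product Gaussian measure on `ℝ^q` with coordinate means `m i` and variances `s i`. -/
noncomputable def gaussPi (q : ℕ) (m s : Fin q → ℝ) : Measure (Fin q → ℝ) :=
  Measure.pi fun i => gaussianReal (m i) (s i).toNNReal

open Real
open scoped NNReal ENNReal

section OneDim

lemma gauss_integral_density (μ0 : ℝ) {v : ℝ≥0} (hv : v ≠ 0) (g : ℝ → ℝ) :
    ∫ x, g x ∂gaussianReal μ0 v = ∫ x, gaussianPDFReal μ0 v x * g x := by
  rw [gaussianReal_of_var_ne_zero _ hv, gaussianPDF_def]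
  have h : (fun x => ENNReal.ofReal (gaussianPDFReal μ0 v x))
      = fun x => ((gaussianPDFReal μ0 v x).toNNReal : ℝ≥0∞) := rfl
  rw [h, integral_withDensity_eq_integral_smul
    ((measurable_gaussianPDFReal μ0 v).real_toNNReal)]
  congr 1; ext x
  rw [NNReal.smul_def, Real.coe_toNNReal _ (gaussianPDFReal_nonneg μ0 v x), smul_eq_mul]

lemma gauss_integrable_iff (μ0 : ℝ) {v : ℝ≥0} (hv : v ≠ 0) (g : ℝ → ℝ) :
    Integrable g (gaussianReal μ0 v)
      ↔ Integrable (fun x => g x * gaussianPDFReal μ0 v x) volume := by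
  rw [gaussianReal_of_var_ne_zero _ hv, gaussianPDF_def,
    integrable_withDensity_iff (measurable_gaussianPDFReal μ0 v).ennreal_ofReal
      (ae_of_all _ fun x => ENNReal.ofReal_lt_top)]
  simp_rw [ENNReal.toReal_ofReal (gaussianPDFReal_nonneg μ0 v _)]

lemma gauss_pdf_mul_exp (μ0 t : ℝ) {v : ℝ≥0} (hv : v ≠ 0) (x : ℝ) :
    gaussianPDFReal μ0 v x * rexp (t * x)
      = rexp (t * μ0 + t ^ 2 * v / 2) * gaussianPDFReal (μ0 + t * v) v x := by
  have hv' : (v : ℝ) ≠ 0 := by exact_mod_cast hv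
  have key : -(x - μ0) ^ 2 / (2 * (v : ℝ)) + t * x
      = (t * μ0 + t ^ 2 * v / 2) + -(x - (μ0 + t * v)) ^ 2 / (2 * (v : ℝ)) := by
    field_simp
    ring
  simp only [gaussianPDFReal]
  rw [mul_assoc, ← Real.exp_add, key, Real.exp_add, mul_left_comm]

lemma gauss_integral_exp (μ0 t : ℝ) {v : ℝ≥0} (hv : v ≠ 0) :
    ∫ x, rexp (t * x) ∂gaussianReal μ0 v = rexp (t * μ0 + t ^ 2 * v / 2) := by
  rw [gauss_integral_density μ0 hv]
  simp_rw [gauss_pdf_mul_exp μ0 t hv]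
  rw [integral_const_mul, integral_gaussianPDFReal_eq_one _ hv, mul_one]

lemma gauss_integrable_exp (μ0 t : ℝ) {v : ℝ≥0} (hv : v ≠ 0) :
    Integrable (fun x => rexp (t * x)) (gaussianReal μ0 v) := by
  rw [gauss_integrable_iff μ0 hv]
  have h : (fun x => rexp (t * x) * gaussianPDFReal μ0 v x)
      = fun x => rexp (t * μ0 + t ^ 2 * v / 2) * gaussianPDFReal (μ0 + t * v) v x := by
    ext x; rw [← gauss_pdf_mul_exp μ0 t hv x, mul_comm]
  rw [h]
  exact (integrable_gaussianPDFReal _ _).const_mul _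

lemma gauss_integrable_id (μ0 : ℝ) {v : ℝ≥0} (hv : v ≠ 0) :
    Integrable (fun x => x) (gaussianReal μ0 v) := by
  have h1 := gauss_integrable_exp μ0 1 hv
  have h2 := gauss_integrable_exp μ0 (-1) hv
  refine (h1.add h2).mono measurable_id.aestronglyMeasurable (ae_of_all _ fun y => ?_)
  simp only [one_mul, neg_one_mul, Real.norm_eq_abs, id]
  have hb : |y| ≤ rexp y + rexp (-y) := by
    rcases le_or_gt 0 y with h | h
    · rw [abs_of_nonneg h]; nlinarith [Real.add_one_le_exp y, Real.exp_pos (-y)]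
    · rw [abs_of_neg h]; nlinarith [Real.add_one_le_exp (-y), Real.exp_pos y]
  exact hb.trans (le_abs_self _)

lemma gauss_integral_id_zero {v : ℝ≥0} (hv : v ≠ 0) :
    ∫ x, x ∂gaussianReal 0 v = 0 := by
  have hone : (⟨(-1 : ℝ) ^ 2, sq_nonneg _⟩ : ℝ≥0) = 1 := by
    ext; norm_num
  have hmap : (gaussianReal 0 v).map (fun x => (-1 : ℝ) * x) = gaussianReal 0 v := by
    rw [gaussianReal_map_const_mul (-1)]
    congr 1
    · simp
    · ext; simp
  have h := integral_map (μ := gaussianReal 0 v) (φ := fun x => (-1 : ℝ) * x)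
    ((measurable_id.const_mul _).aemeasurable)
    (f := fun x => x) (by rw [hmap]; exact measurable_id.aestronglyMeasurable)
  rw [hmap] at h
  rw [integral_const_mul] at h
  simp only at h
  linarith

lemma gauss_integral_id (μ0 : ℝ) {v : ℝ≥0} (hv : v ≠ 0) :
    ∫ x, x ∂gaussianReal μ0 v = μ0 := by
  have hmap : (gaussianReal 0 v).map (· + μ0) = gaussianReal μ0 v := by
    rw [gaussianReal_map_add_const, zero_add]
  rw [← hmap, integral_map (φ := fun x => x + μ0)
    ((measurable_id.add_const μ0).aemeasurable)
    (by rw [hmap]; exact measurable_id.aestronglyMeasurable)]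
  rw [integral_add (gauss_integrable_id 0 hv) (integrable_const _)]
  rw [gauss_integral_id_zero hv, integral_const]
  simp

end OneDim

instance gaussPi.instIsProbabilityMeasure (q : ℕ) (m s : Fin q → ℝ) :
    IsProbabilityMeasure (gaussPi q m s) := by
  unfold gaussPi; infer_instance

/-- Type synonym for `ℝ` carrying the `i`-th coordinate Gaussian as volume. -/
def GaussCoord (q : ℕ) (m s : Fin q → ℝ) (i : Fin q) : Type := ℝ

noncomputable instance GaussCoord.instMeasureSpace (q : ℕ) (m s : Fin q → ℝ) (i : Fin q) :
    MeasureSpace (GaussCoord q m s i) :=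
  { toMeasurableSpace := inferInstanceAs (MeasurableSpace ℝ)
    volume := gaussianReal (m i) (s i).toNNReal }

def GaussCoord.val {q : ℕ} {m s : Fin q → ℝ} {i : Fin q} (x : GaussCoord q m s i) : ℝ := x

instance (q : ℕ) (m s : Fin q → ℝ) (i : Fin q) :
    SigmaFinite (volume : Measure (GaussCoord q m s i)) :=
  inferInstanceAs (SigmaFinite (gaussianReal (m i) (s i).toNNReal))

lemma toNNReal_ne_zero_of_pos {r : ℝ} (hr : 0 < r) : r.toNNReal ≠ 0 := by
  simp [Real.toNNReal_eq_zero, not_le, hr]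

lemma gaussPi_map_eval {q : ℕ} (m s : Fin q → ℝ) (i : Fin q) :
    (gaussPi q m s).map (fun w => w i) = gaussianReal (m i) (s i).toNNReal := by
  ext t ht
  rw [Measure.map_apply (measurable_pi_apply i) ht]
  have hpre : (fun w : Fin q → ℝ => w i) ⁻¹' t
      = Set.pi Set.univ (Function.update (fun _ => (Set.univ : Set ℝ)) i t) := by
    ext w
    simp only [Set.mem_preimage, Set.mem_pi, Set.mem_univ, true_implies,
      Function.update_apply]
    constructor
    · intro hw j
      by_cases h : j = i
      · subst h; simp [hw]
      · simp [h]
    · intro hw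
      have := hw i
      simpa using this
  rw [gaussPi, hpre, Measure.pi_pi]
  rw [Finset.prod_eq_single i (fun j _ hj => by
      rw [Function.update_of_ne hj]; exact measure_univ) (by simp)]
  rw [Function.update_self]

lemma gaussPi_integrable_eval {q : ℕ} (m s : Fin q → ℝ) (hs : ∀ i, 0 < s i) (i : Fin q) :
    Integrable (fun w => w i) (gaussPi q m s) := by
  have hv := toNNReal_ne_zero_of_pos (hs i)
  have h := gauss_integrable_id (m i) hv
  rw [← gaussPi_map_eval m s i] at h
  exact (integrable_map_measure measurable_id.aestronglyMeasurable
    (measurable_pi_apply i).aemeasurable).mp h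

lemma gaussPi_integral_eval {q : ℕ} (m s : Fin q → ℝ) (hs : ∀ i, 0 < s i) (i : Fin q) :
    ∫ w, w i ∂gaussPi q m s = m i := by
  have hv := toNNReal_ne_zero_of_pos (hs i)
  calc ∫ w, w i ∂gaussPi q m s
      = ∫ x, x ∂(gaussPi q m s).map (fun w => w i) :=
        (integral_map (measurable_pi_apply i).aemeasurable
          (by rw [gaussPi_map_eval m s i]; exact measurable_id.aestronglyMeasurable)).symm
    _ = m i := by rw [gaussPi_map_eval m s i]; exact gauss_integral_id _ hv

lemma gaussPi_integral_exp {q : ℕ} (m s : Fin q → ℝ) (hs : ∀ i, 0 < s i) (c : Fin q → ℝ) :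
    ∫ w, rexp (∑ i, c i * w i) ∂gaussPi q m s
      = rexp ((∑ i, c i * m i) + (1 / 2) * ∑ i, c i ^ 2 * s i) := by
  have hv : ∀ i, (s i).toNNReal ≠ 0 := fun i => toNNReal_ne_zero_of_pos (hs i)
  calc ∫ w, rexp (∑ i, c i * w i) ∂gaussPi q m s
      = ∫ w : ∀ i, GaussCoord q m s i, ∏ i, rexp (c i * (w i).val) := by
        simp_rw [← Real.exp_sum]; rfl
    _ = ∏ i, ∫ x : GaussCoord q m s i, rexp (c i * x.val) :=
        integral_fintype_prod_eq_prod (fun i (x : GaussCoord q m s i) => rexp (c i * x.val))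
    _ = ∏ i, rexp (c i * m i + (c i) ^ 2 * ((s i).toNNReal : ℝ) / 2) := by
        refine Finset.prod_congr rfl fun i _ => ?_
        exact gauss_integral_exp (m i) (c i) (hv i)
    _ = rexp ((∑ i, c i * m i) + (1 / 2) * ∑ i, c i ^ 2 * s i) := by
        rw [← Real.exp_sum]
        congr 1
        rw [Finset.sum_add_distrib, Finset.mul_sum]
        congr 1
        refine Finset.sum_congr rfl fun i _ => ?_
        rw [Real.coe_toNNReal _ (hs i).le]
        ring

lemma gaussPi_integrable_exp {q : ℕ} (m s : Fin q → ℝ) (hs : ∀ i, 0 < s i) (c : Fin q → ℝ) :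
    Integrable (fun w => rexp (∑ i, c i * w i)) (gaussPi q m s) := by
  have hv : ∀ i, (s i).toNNReal ≠ 0 := fun i => toNNReal_ne_zero_of_pos (hs i)
  have hi : ∀ i, Integrable (fun x : GaussCoord q m s i => rexp (c i * x.val)) volume :=
    fun i => gauss_integrable_exp (m i) (c i) (hv i)
  have h : Integrable (fun w : ∀ i, GaussCoord q m s i => ∏ i, rexp (c i * (w i).val)) volume :=
    Integrable.fintype_prod_dep hi
  have heq : (fun w : Fin q → ℝ => rexp (∑ i, c i * w i))
      = fun w => ∏ i, rexp (c i * w i) := funext fun w => Real.exp_sum _ _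
  rw [heq]
  exact h

lemma gaussPi_integral_exp' {q : ℕ} (m s : Fin q → ℝ) (hs : ∀ i, 0 < s i)
    (c a : Fin q → ℝ) :
    ∫ w, rexp (∑ i, c i * (a i + w i)) ∂gaussPi q m s
      = rexp ((∑ i, c i * (a i + m i)) + (1 / 2) * ∑ i, c i ^ 2 * s i) := by
  have h : ∀ w : Fin q → ℝ, rexp (∑ i, c i * (a i + w i))
      = rexp (∑ i, c i * a i) * rexp (∑ i, c i * w i) := by
    intro w
    rw [← Real.exp_add, ← Finset.sum_add_distrib]
    congr 1
    exact Finset.sum_congr rfl fun i _ => by ring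
  simp_rw [h]
  rw [integral_const_mul, gaussPi_integral_exp m s hs c, ← Real.exp_add]
  congr 1
  have h2 : (∑ i, c i * a i) + ∑ i, c i * m i = ∑ i, c i * (a i + m i) := by
    rw [← Finset.sum_add_distrib]
    exact Finset.sum_congr rfl fun i _ => by ring
  rw [← add_assoc, h2]

lemma gaussPi_integrable_exp' {q : ℕ} (m s : Fin q → ℝ) (hs : ∀ i, 0 < s i)
    (c a : Fin q → ℝ) :
    Integrable (fun w => rexp (∑ i, c i * (a i + w i))) (gaussPi q m s) := by
  have h : (fun w : Fin q → ℝ => rexp (∑ i, c i * (a i + w i)))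
      = fun w => rexp (∑ i, c i * a i) * rexp (∑ i, c i * w i) := by
    funext w
    rw [← Real.exp_add, ← Finset.sum_add_distrib]
    congr 1
    exact Finset.sum_congr rfl fun i _ => by ring
  rw [h]
  exact (gaussPi_integrable_exp m s hs c).const_mul _

lemma gaussPi_integrable_affine {q : ℕ} (m s : Fin q → ℝ) (hs : ∀ i, 0 < s i)
    (c a : Fin q → ℝ) :
    Integrable (fun w => ∑ i, c i * (a i + w i)) (gaussPi q m s) := by
  refine integrable_finset_sum _ fun i _ => ?_
  have h : (fun w : Fin q → ℝ => c i * (a i + w i))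
      = fun w => c i * a i + c i * w i := funext fun w => by ring
  rw [h]
  exact (integrable_const _).add ((gaussPi_integrable_eval m s hs i).const_mul _)

lemma gaussPi_integral_affine {q : ℕ} (m s : Fin q → ℝ) (hs : ∀ i, 0 < s i)
    (c a : Fin q → ℝ) :
    ∫ w, ∑ i, c i * (a i + w i) ∂gaussPi q m s = ∑ i, c i * (a i + m i) := by
  rw [integral_finset_sum _ (fun i _ => by
    have h : (fun w : Fin q → ℝ => c i * (a i + w i))
        = fun w => c i * a i + c i * w i := funext fun w => by ring
    rw [h]
    exact (integrable_const _).add ((gaussPi_integrable_eval m s hs i).const_mul _))]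
  refine Finset.sum_congr rfl fun i _ => ?_
  have h : (fun w : Fin q → ℝ => c i * (a i + w i))
      = fun w => c i * a i + c i * w i := funext fun w => by ring
  rw [h, integral_add (integrable_const _) ((gaussPi_integrable_eval m s hs i).const_mul _),
    integral_const, integral_const_mul, gaussPi_integral_eval m s hs i]
  simp [measure_univ]
  ring

/-- Closed form for the expected Poisson log-likelihood of counts `x` under log-intensities
`⟨v_j, a + W⟩` with `W ∼ N(m, diag s)`:
`E[Σ_j (x_j ⟨v_j, a+W⟩ − exp⟨v_j, a+W⟩ − log x_j!)]
  = Σ_j x_j ⟨v_j, a+m⟩ − Σ_j exp(⟨v_j, a+m⟩ + (1/2) Σ_i v_{ji}² s_i) − Σ_j log x_j!`. -/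
theorem expected_poisson_loglik_gva
    (p q : ℕ) (x : Fin p → ℕ) (v : Fin p → Fin q → ℝ) (a : Fin q → ℝ)
    (m : Fin q → ℝ) (s : Fin q → ℝ) (hs : ∀ i, 0 < s i) :
    ∫ w, (∑ j, ((x j : ℝ) * (∑ i, v j i * (a i + w i))
        - Real.exp (∑ i, v j i * (a i + w i))
        - Real.log (Nat.factorial (x j)))) ∂(gaussPi q m s) =
      (∑ j, (x j : ℝ) * (∑ i, v j i * (a i + m i)))
        - (∑ j, Real.exp ((∑ i, v j i * (a i + m i)) + (1 / 2) * ∑ i, (v j i) ^ 2 * s i))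
        - ∑ j, Real.log (Nat.factorial (x j)) := by
  have hA : ∀ j, Integrable (fun w => (x j : ℝ) * ∑ i, v j i * (a i + w i)) (gaussPi q m s) :=
    fun j => (gaussPi_integrable_affine m s hs (v j) a).const_mul _
  have hB : ∀ j, Integrable (fun w => rexp (∑ i, v j i * (a i + w i))) (gaussPi q m s) :=
    fun j => gaussPi_integrable_exp' m s hs (v j) a
  have hInt : ∀ j : Fin p, Integrable (fun w : Fin q → ℝ =>
      ((x j : ℝ) * (∑ i, v j i * (a i + w i)) - rexp (∑ i, v j i * (a i + w i))
        - Real.log (Nat.factorial (x j)))) (gaussPi q m s) :=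
    fun j => ((hA j).sub (hB j)).sub (integrable_const _)
  rw [integral_finset_sum Finset.univ (fun j _ => hInt j)]
  have hj : ∀ j, ∫ w, ((x j : ℝ) * (∑ i, v j i * (a i + w i))
        - rexp (∑ i, v j i * (a i + w i)) - Real.log (Nat.factorial (x j))) ∂gaussPi q m s
      = (x j : ℝ) * (∑ i, v j i * (a i + m i))
        - rexp ((∑ i, v j i * (a i + m i)) + (1 / 2) * ∑ i, (v j i) ^ 2 * s i)
        - Real.log (Nat.factorial (x j)) := by
    intro j
    have hAB : Integrable (fun w : Fin q → ℝ =>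
        (x j : ℝ) * (∑ i, v j i * (a i + w i)) - rexp (∑ i, v j i * (a i + w i)))
        (gaussPi q m s) := (hA j).sub (hB j)
    rw [integral_sub hAB (integrable_const _),
      integral_sub (hA j) (hB j), integral_const_mul,
      gaussPi_integral_affine m s hs (v j) a, gaussPi_integral_exp' m s hs (v j) a,
      integral_const]
    simp [measure_univ]
  rw [Finset.sum_congr rfl fun j _ => hj j]
  rw [Finset.sum_sub_distrib, Finset.sum_sub_distrib]
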